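/- (Deterministic skeleton of Proposition 1.) Let E be a real inner product space, η > 0, γ ∈ (0,1), and let g : E → E satisfy ‖x − y − η(g(x) − g(y))‖ ≤ γ‖x − y‖ for all x, y ∈ E. Let (x_s)_{s≥0}, (y_s)_{s≥0}, and (e_s)_{s≥1} be sequences in E such that for every s ≥ 1, x_s − y_s = (x_{s−1} − y_{s−1}) − η(g(x_{s−1}) − g(y_{s−1})) + e_s. Then for every s' ≥ 0: ‖x_{s'} − y_{s'}‖² ≤ ((1+γ)/2)^{2s'} · ‖x₀ − y₀‖² + ((1+γ)² / ((1−γ)(1+3γ))) · Σ_{s=1}^{s'} ((1+γ)/2)^{2(s'−s)} · ‖e_s‖². -/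

import Mathlib

lemma young_norm {E : Type*} [NormedAddCommGroup E] [InnerProductSpace ℝ E]
    (a b : E) (δ : ℝ) (hδ : 0 < δ) :
    ‖a + b‖ ^ 2 ≤ (1 + δ) * ‖a‖ ^ 2 + (1 + δ⁻¹) * ‖b‖ ^ 2 := by
  have h1 : ‖a + b‖ ^ 2 = ‖a‖ ^ 2 + 2 * inner ℝ a b + ‖b‖ ^ 2 := norm_add_sq_real a b
  have h2 : (inner ℝ a b : ℝ) ≤ ‖a‖ * ‖b‖ := real_inner_le_norm a b
  have h3 : 2 * (‖a‖ * ‖b‖) ≤ δ * ‖a‖ ^ 2 + δ⁻¹ * ‖b‖ ^ 2 := by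
    have h4 : 2 * (‖a‖ * ‖b‖) * δ ≤ (δ * ‖a‖ ^ 2 + δ⁻¹ * ‖b‖ ^ 2) * δ := by
      have h5 : δ⁻¹ * ‖b‖ ^ 2 * δ = ‖b‖ ^ 2 := by field_simp
      nlinarith [sq_nonneg (δ * ‖a‖ - ‖b‖)]
    exact le_of_mul_le_mul_right h4 hδ
  nlinarith

/-- Deterministic skeleton of Proposition 1: if the map `x ↦ x − η g(x)` is a
`γ`-contraction on differences and the coupled iterates satisfy
`x_s − y_s = (x_{s−1} − y_{s−1}) − η(g(x_{s−1}) − g(y_{s−1})) + e_s`, then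
`‖x_{s'} − y_{s'}‖² ≤ ((1+γ)/2)^{2s'} ‖x₀ − y₀‖² +
((1+γ)²/((1−γ)(1+3γ))) Σ_{s=1}^{s'} ((1+γ)/2)^{2(s'−s)} ‖e_s‖²`. -/
theorem wflmc_pathwise_recursion {E : Type*} [NormedAddCommGroup E]
    [InnerProductSpace ℝ E] (η γ : ℝ) (hη : 0 < η) (hγ0 : 0 < γ) (hγ1 : γ < 1)
    (g : E → E)
    (hg : ∀ x y : E, ‖x - y - η • (g x - g y)‖ ≤ γ * ‖x - y‖)
    (x y e : ℕ → E)
    (hrec : ∀ s : ℕ,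
      x (s + 1) - y (s + 1) = (x s - y s) - η • (g (x s) - g (y s)) + e (s + 1)) :
    ∀ s' : ℕ, ‖x s' - y s'‖ ^ 2 ≤
      ((1 + γ) / 2) ^ (2 * s') * ‖x 0 - y 0‖ ^ 2 +
      (1 + γ) ^ 2 / ((1 - γ) * (1 + 3 * γ)) *
        ∑ s ∈ Finset.range s',
          ((1 + γ) / 2) ^ (2 * (s' - (s + 1))) * ‖e (s + 1)‖ ^ 2 := by
  set q : ℝ := ((1 + γ) / 2) ^ 2 with hq
  set C : ℝ := (1 + γ) ^ 2 / ((1 - γ) * (1 + 3 * γ)) with hC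
  have hden : 0 < (1 - γ) * (1 + 3 * γ) := by nlinarith
  have hq0 : 0 ≤ q := sq_nonneg _
  have hC0 : 0 ≤ C := div_nonneg (by positivity) hden.le
  set δ : ℝ := (1 - γ) * (1 + 3 * γ) / (4 * γ ^ 2) with hδdef
  have hδ : 0 < δ := div_pos hden (by positivity)
  -- per-step bound
  have step : ∀ s : ℕ, ‖x (s + 1) - y (s + 1)‖ ^ 2 ≤
      q * ‖x s - y s‖ ^ 2 + C * ‖e (s + 1)‖ ^ 2 := by
    intro s
    rw [hrec s]
    have h1 := young_norm ((x s - y s) - η • (g (x s) - g (y s))) (e (s + 1)) δ hδ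
    have h2 := hg (x s) (y s)
    have hid1 : (1 + δ) * γ ^ 2 = q := by
      rw [hq, hδdef]; field_simp; ring
    have hid2 : 1 + δ⁻¹ = C := by
      have h1γ : (1 - γ) ≠ 0 := sub_ne_zero.mpr (ne_of_gt hγ1)
      have h3γ : (1 + 3 * γ) ≠ 0 := by positivity
      have hγne : γ ≠ 0 := hγ0.ne'
      rw [hC, hδdef]; rw [inv_div]; field_simp; ring
    have h3 : (1 + δ) * ‖(x s - y s) - η • (g (x s) - g (y s))‖ ^ 2
        ≤ q * ‖x s - y s‖ ^ 2 := by
      rw [← hid1]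
      have := sq_le_sq' (by linarith [norm_nonneg ((x s - y s) - η • (g (x s) - g (y s))), mul_nonneg hγ0.le (norm_nonneg (x s - y s))]) h2
      have h1δ : (0:ℝ) ≤ 1 + δ := by linarith
      calc (1 + δ) * ‖(x s - y s) - η • (g (x s) - g (y s))‖ ^ 2
          ≤ (1 + δ) * (γ * ‖x s - y s‖) ^ 2 := by
            apply mul_le_mul_of_nonneg_left _ h1δ
            exact pow_le_pow_left₀ (norm_nonneg _) h2 2
        _ = (1 + δ) * γ ^ 2 * ‖x s - y s‖ ^ 2 := by ring
    calc ‖(x s - y s) - η • (g (x s) - g (y s)) + e (s + 1)‖ ^ 2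
        ≤ (1 + δ) * ‖(x s - y s) - η • (g (x s) - g (y s))‖ ^ 2
          + (1 + δ⁻¹) * ‖e (s + 1)‖ ^ 2 := h1
      _ ≤ q * ‖x s - y s‖ ^ 2 + C * ‖e (s + 1)‖ ^ 2 := by
          rw [hid2] at *; linarith
  -- rewrite powers in base q
  intro s'
  induction s' with
  | zero => simp
  | succ n ih =>
    have hsum : ∑ s ∈ Finset.range (n + 1),
        ((1 + γ) / 2) ^ (2 * (n + 1 - (s + 1))) * ‖e (s + 1)‖ ^ 2
        = q * (∑ s ∈ Finset.range n,
            ((1 + γ) / 2) ^ (2 * (n - (s + 1))) * ‖e (s + 1)‖ ^ 2)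
          + ‖e (n + 1)‖ ^ 2 := by
      rw [Finset.sum_range_succ, Finset.mul_sum]
      simp only [Nat.sub_self, pow_zero, one_mul, Nat.add_sub_cancel]
      congr 1
      · apply Finset.sum_congr rfl
        intro s hs
        have hs' : s + 1 ≤ n := Finset.mem_range.mp hs
        have : n + 1 - (s + 1) = (n - (s + 1)) + 1 := by omega
        rw [this, hq, pow_mul, pow_mul, pow_succ]
        ring
      · simp
    rw [hsum]
    have hpow : ((1 + γ) / 2) ^ (2 * (n + 1)) = q * ((1 + γ) / 2) ^ (2 * n) := by
      rw [hq, pow_mul, pow_mul, pow_succ]; ring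
    rw [hpow]
    calc ‖x (n + 1) - y (n + 1)‖ ^ 2
        ≤ q * ‖x n - y n‖ ^ 2 + C * ‖e (n + 1)‖ ^ 2 := step n
      _ ≤ q * (((1 + γ) / 2) ^ (2 * n) * ‖x 0 - y 0‖ ^ 2
            + C * ∑ s ∈ Finset.range n,
              ((1 + γ) / 2) ^ (2 * (n - (s + 1))) * ‖e (s + 1)‖ ^ 2)
          + C * ‖e (n + 1)‖ ^ 2 := by
          have := mul_le_mul_of_nonneg_left ih hq0
          linarith
      _ = q * ((1 + γ) / 2) ^ (2 * n) * ‖x 0 - y 0‖ ^ 2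
          + C * (q * (∑ s ∈ Finset.range n,
              ((1 + γ) / 2) ^ (2 * (n - (s + 1))) * ‖e (s + 1)‖ ^ 2)
            + ‖e (n + 1)‖ ^ 2) := by ring
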